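/- Let M be an abelian group with |M| = κ > ℵ₀ whose torsion subgroup t(M) satisfies |t(M)| < κ, let S be a subgroup of M with |S| < κ, and let E ⊆ M with |E| = κ. Then there exists x ∈ E \ t(M) such that the cyclic subgroup ⟨x⟩ generated by x satisfies ⟨x⟩ ∩ S = {0}. -/

import Mathlib

open Cardinal

theorem stmt5 (M : Type*) [AddCommGroup M]
    (hM : Cardinal.aleph0 < Cardinal.mk M)
    (ht : Cardinal.mk (AddCommGroup.torsion M) < Cardinal.mk M)
    (S : AddSubgroup M) (hS : Cardinal.mk S < Cardinal.mk M)
    (E : Set M) (hE : Cardinal.mk E = Cardinal.mk M) :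
    ∃ x ∈ E, x ∉ AddCommGroup.torsion M ∧
      AddSubgroup.zmultiples x ⊓ S = ⊥ := by
  classical
  set T := AddCommGroup.torsion M with hT
  let C : (↥S × ULift.{_,0} ℤ) → Set M :=
    fun p => {x : M | p.2.down • x = (p.1 : M) ∧ (p.1 : M) ≠ 0}
  have hC : ∀ p, Cardinal.mk (C p) ≤ Cardinal.mk T := by
    rintro ⟨s, ⟨n⟩⟩
    rcases Set.eq_empty_or_nonempty (C (s, ⟨n⟩)) with h | ⟨x₀, hx₀, hs⟩
    · simp [h]
    · have hn : n ≠ 0 := by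
        rintro rfl
        simp at hx₀
        exact hs hx₀.symm
      have hinj : ∀ x : C (s, ⟨n⟩), (x : M) - x₀ ∈ T := by
        rintro ⟨x, hx, -⟩
        rw [hT, AddCommGroup.mem_torsion]
        rw [isOfFinAddOrder_iff_zsmul_eq_zero]
        exact ⟨n, hn, by simp only [smul_sub, hx, hx₀, sub_self]⟩
      have : Function.Injective (fun x : C (s, ⟨n⟩) => (⟨(x : M) - x₀, hinj x⟩ : T)) := by
        rintro ⟨x, hx⟩ ⟨y, hy⟩ h
        simp only [Subtype.mk.injEq, sub_left_injective.eq_iff] at h ⊢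
        exact h
      exact Cardinal.mk_le_of_injective this
  set B : Set M := (T : Set M) ∪ ⋃ p, C p with hB
  have hBlt : Cardinal.mk B < Cardinal.mk M := by
    have h1 : Cardinal.mk B ≤ Cardinal.mk T + Cardinal.mk (↥S × ULift.{_,0} ℤ) * Cardinal.mk T := by
      refine (Cardinal.mk_union_le _ _).trans ?_
      gcongr
      · exact le_rfl
      exact (Cardinal.mk_iUnion_le _).trans (by gcongr; exact ciSup_le' hC)
    refine h1.trans_lt ?_
    have hκ : Cardinal.aleph0 ≤ Cardinal.mk M := hM.le
    refine Cardinal.add_lt_of_lt hκ ht (Cardinal.mul_lt_of_lt hκ ?_ ht)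
    rw [Cardinal.mk_prod]
    refine Cardinal.mul_lt_of_lt hκ ((Cardinal.lift_lt.mpr hS).trans_le ?_)
      (by simpa using hM)
    simp [Cardinal.lift_id]
  have hEB : ¬ E ⊆ B := fun h => absurd (hE ▸ Cardinal.mk_le_mk_of_subset h) hBlt.not_ge
  obtain ⟨x, hxE, hxB⟩ := Set.not_subset.mp hEB
  refine ⟨x, hxE, fun hxT => hxB (Or.inl hxT), ?_⟩
  rw [eq_bot_iff]
  rintro y hy
  rw [AddSubgroup.mem_inf] at hy
  obtain ⟨⟨n, hn⟩, hyS⟩ := hy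
  rw [AddSubgroup.mem_bot]
  by_contra hy0
  exact hxB (Or.inr (Set.mem_iUnion.mpr ⟨(⟨y, hyS⟩, ⟨n⟩), hn, hy0⟩))
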